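/- Let (G,σ) be a best match graph and (T,σ) its least resolved tree with root ρ. Then for every vertex v of T with v ≺_T ρ, the best match graph G(T(v), σ|.) of the subtree rooted at v is connected. -/

import Mathlib

/-- A (finite) rooted tree on vertex type `V`, encoded by its ancestor relation:
`anc u v` means that `u` is an ancestor of `v`, i.e. `u` lies on the path from
the root to `v` (in particular the relation is reflexive, `v ⪯_T u ↔ anc u v`). -/
structure RTree (V : Type) where
  anc : V → V → Prop
  refl : ∀ v, anc v v
  antisymm : ∀ u v, anc u v → anc v u → u = v
  trans : ∀ u v w, anc u v → anc v w → anc u w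
  root : V
  root_anc : ∀ v, anc root v
  chain : ∀ u v w, anc u w → anc v w → anc u v ∨ anc v u

namespace RTree

variable {V C : Type}

/-- a leaf: a vertex without proper descendants. -/
def IsLeaf (T : RTree V) (v : V) : Prop := ∀ w, T.anc v w → w = v

/-- `v` is a child of `u`: `v ≺_T u` with no vertex strictly in between. -/
def IsChild (T : RTree V) (v u : V) : Prop :=
  T.anc u v ∧ u ≠ v ∧ ∀ w, T.anc u w → T.anc w v → w = u ∨ w = v

/-- phylogenetic: every inner vertex has at least two children. -/
def Phylo (T : RTree V) : Prop :=
  ∀ u, ¬ T.IsLeaf u → ∃ v w, v ≠ w ∧ T.IsChild v u ∧ T.IsChild w u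

/-- the leaf set `L(T)`. -/
def leaves (T : RTree V) : Set V := {x | T.IsLeaf x}

/-- `y` is a best match of `x` in the leaf-colored tree `(T,σ)`:
both are leaves, `σ x ≠ σ y`, and for every leaf `y'` of the color `σ y` we have
`lca(x,y) ⪯_T lca(x,y')`, i.e. every common ancestor of `x` and `y'` is an
ancestor of `y`.  These are exactly the arcs of the best match graph `G(T,σ)`,
whose vertex set is the leaf set of `T`. -/
def BestMatch (T : RTree V) (σ : V → C) (x y : V) : Prop :=
  T.IsLeaf x ∧ T.IsLeaf y ∧ σ x ≠ σ y ∧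
    ∀ y', T.IsLeaf y' → σ y' = σ y →
      ∀ u, T.anc u x → T.anc u y' → T.anc u y

/-- the subtree `T(v)` of `T` rooted at `v`. -/
def subtree (T : RTree V) (v : V) : RTree {w : V // T.anc v w} where
  anc a b := T.anc a.1 b.1
  refl a := T.refl a.1
  antisymm a b h1 h2 := Subtype.ext (T.antisymm _ _ h1 h2)
  trans a b c h1 h2 := T.trans _ _ _ h1 h2
  root := ⟨v, T.refl v⟩
  root_anc a := a.2
  chain a b c h1 h2 := T.chain _ _ _ h1 h2

/-- contraction of the tree edge between the non-root vertex `v` and its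
parent: the vertex `v` is identified with its parent, i.e. deleted. -/
def contract (T : RTree V) (v : V) (hv : v ≠ T.root) : RTree {w : V // w ≠ v} where
  anc a b := T.anc a.1 b.1
  refl a := T.refl a.1
  antisymm a b h1 h2 := Subtype.ext (T.antisymm _ _ h1 h2)
  trans a b c h1 h2 := T.trans _ _ _ h1 h2
  root := ⟨T.root, Ne.symm hv⟩
  root_anc a := T.root_anc a.1
  chain a b c h1 h2 := T.chain _ _ _ h1 h2

/-- The edge of `T` between `v` and its parent is redundant with respect to
`G(T,σ)`: contracting it yields a tree that still explains `G(T,σ)`, i.e. the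
contracted tree has the same leaf set and induces the same best-match arcs.
(Edges of a rooted tree are identified with their lower endpoint `v`.) -/
def Redundant (T : RTree V) (σ : V → C) (v : V) : Prop :=
  ∃ hv : v ≠ T.root,
    ¬ T.IsLeaf v ∧
    (∀ w : {w : V // w ≠ v}, T.IsLeaf w.1 ↔ (T.contract v hv).IsLeaf w) ∧
    (∀ x y : {w : V // w ≠ v},
      (T.BestMatch σ x.1 y.1 ↔ (T.contract v hv).BestMatch (fun w => σ w.1) x y))

/-- `(T,σ)` is the least resolved tree (of the BMG `G(T,σ)`): a phylogenetic
tree none of whose edges is redundant. -/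
def LeastResolved (T : RTree V) (σ : V → C) : Prop :=
  T.Phylo ∧ ∀ v, ¬ T.Redundant σ v

/-- the support leaves `S_u = child_T(u) ∩ L(T)` of a vertex `u`. -/
def SupportLeaves (T : RTree V) (u : V) : Set V :=
  {v | T.IsChild v u ∧ T.IsLeaf v}

/-- the set of colors `σ(L(T(v)))` occurring on leaves of the subtree `T(v)`. -/
def subColors (T : RTree V) (σ : V → C) (v : V) : Set C :=
  σ '' {x | T.IsLeaf x ∧ T.anc v x}

/-- the set of colors `σ(L(T))` of the leaves of `T`. -/
def leafColors (T : RTree V) (σ : V → C) : Set C := σ '' T.leaves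

/-- the leaf coloring uses exactly two colors, i.e. `G(T,σ)` is a 2-BMG. -/
def TwoColored (T : RTree V) (σ : V → C) : Prop :=
  ∃ c₁ c₂ : C, c₁ ≠ c₂ ∧ T.leafColors σ = {c₁, c₂}

end RTree

/-- the digraph with arc relation `A`, restricted to the vertex set `S`, is
connected: between any two vertices of `S` there is a path inside `S` in the
underlying undirected graph. -/
def ConnectedOn {β : Type} (A : β → β → Prop) (S : Set β) : Prop :=
  S.Nonempty ∧ ∀ x ∈ S, ∀ y ∈ S,
    Relation.ReflTransGen (fun a b => a ∈ S ∧ b ∈ S ∧ (A a b ∨ A b a)) x y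

/-- `K` is a connected component of the digraph induced by the arc relation `A`
on the vertex set `S`: a maximal connected subset of `S`. -/
def IsComponent {β : Type} (A : β → β → Prop) (S : Set β) (K : Set β) : Prop :=
  K ⊆ S ∧ ConnectedOn A K ∧
    ∀ K', K ⊆ K' → K' ⊆ S → ConnectedOn A K' → K' = K

namespace RTree

/-- the best match graph `G(T,σ)` (on the leaf set of `T`) is connected. -/
def BMGConnected {V C : Type} (T : RTree V) (σ : V → C) : Prop :=
  ConnectedOn (T.BestMatch σ) T.leaves

/-- the umbrella vertices `U(G,σ)` of the BMG `G(T,σ)`: leaves having an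
out-arc to every differently colored leaf. -/
def Umbrella {V C : Type} (T : RTree V) (σ : V → C) : Set V :=
  {x | T.IsLeaf x ∧ ∀ y, T.IsLeaf y → σ y ≠ σ x → T.BestMatch σ x y}

/-- `S` is closed under in-neighbours in `G(T,σ)`: `x ∈ S → N⁻(x) ⊆ S`. -/
def InClosed {V C : Type} (T : RTree V) (σ : V → C) (S : Set V) : Prop :=
  ∀ x ∈ S, ∀ y, T.BestMatch σ y x → y ∈ S

/-- `S` is a support set of `G(T,σ)`: a maximal subset of the umbrella
vertices that is closed under in-neighbours. -/
def IsSupportSet {V C : Type} (T : RTree V) (σ : V → C) (S : Set V) : Prop :=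
  S ⊆ T.Umbrella σ ∧ T.InClosed σ S ∧
    ∀ S', S ⊆ S' → S' ⊆ T.Umbrella σ → T.InClosed σ S' → S' = S

end RTree

namespace RTree

section Aux

variable {V C : Type} [Fintype V]

open Classical in
/-- the (finite) set of descendants of `v`. -/
noncomputable def desc (T : RTree V) (v : V) : Finset V :=
  Finset.univ.filter (fun w => T.anc v w)

lemma mem_desc {T : RTree V} {v w : V} : w ∈ T.desc v ↔ T.anc v w := by
  classical
  simp [desc]

lemma desc_card_lt {T : RTree V} {v w : V} (h : T.anc v w) (hne : w ≠ v) :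
    (T.desc w).card < (T.desc v).card := by
  apply Finset.card_lt_card
  constructor
  · intro u hu; exact mem_desc.2 (T.trans _ _ _ h (mem_desc.1 hu))
  · intro hsub
    have hwv := mem_desc.1 (hsub (mem_desc.2 (T.refl v)))
    exact hne (T.antisymm _ _ hwv h)

lemma exists_leaf_below (T : RTree V) : ∀ n, ∀ v : V, (T.desc v).card ≤ n →
    ∃ x, T.IsLeaf x ∧ T.anc v x := by
  intro n
  induction n with
  | zero =>
    intro v hv
    exfalso
    have h1 : v ∈ T.desc v := mem_desc.2 (T.refl v)
    have h2 := Finset.card_pos.2 ⟨v, h1⟩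
    omega
  | succ n ih =>
    intro v hv
    by_cases hL : T.IsLeaf v
    · exact ⟨v, hL, T.refl v⟩
    · have hex : ∃ w, T.anc v w ∧ w ≠ v := by
        by_contra h; push_neg at h
        exact hL (fun w hw => h w hw)
      obtain ⟨w, hw, hne⟩ := hex
      have hlt := desc_card_lt hw hne
      obtain ⟨x, hx, ha⟩ := ih w (by omega)
      exact ⟨x, hx, T.trans _ _ _ hw ha⟩

lemma exists_leaf_below' (T : RTree V) (v : V) : ∃ x, T.IsLeaf x ∧ T.anc v x :=
  exists_leaf_below T (T.desc v).card v le_rfl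

lemma exists_child {T : RTree V} {v x : V} (hvx : T.anc v x) (hne : x ≠ v) :
    ∃ w, T.IsChild w v ∧ T.anc w x := by
  classical
  set D : Finset V := Finset.univ.filter (fun u => T.anc v u ∧ T.anc u x ∧ u ≠ v) with hD
  have hxD : x ∈ D := by simp [hD, hvx, T.refl x, hne]
  obtain ⟨w, hwD, hmax⟩ := D.exists_max_image (fun u => (T.desc u).card) ⟨x, hxD⟩
  simp only [hD, Finset.mem_filter, Finset.mem_univ, true_and] at hwD
  obtain ⟨hvw, hwx, hwv⟩ := hwD
  refine ⟨w, ⟨hvw, Ne.symm hwv, ?_⟩, hwx⟩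
  intro z hvz hzw
  by_cases hz : z = v
  · exact Or.inl hz
  · right
    by_contra hzw'
    have hzD : z ∈ D := by
      simp [hD, hvz, T.trans _ _ _ hzw hwx, hz]
    have h1 := hmax z hzD
    have h2 := desc_card_lt hzw (fun h => hzw' h.symm)
    omega

lemma subtree_isLeaf_iff {T : RTree V} {v : V} (w : {w : V // T.anc v w}) :
    (T.subtree v).IsLeaf w ↔ T.IsLeaf w.1 := by
  constructor
  · intro h u hu
    exact congrArg Subtype.val (h ⟨u, T.trans _ _ _ w.2 hu⟩ hu)
  · intro h u hu
    exact Subtype.ext (h u.1 hu)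

/-- best matches inside the subtree rooted at `v`, phrased at the level of `T`. -/
def BMin (T : RTree V) (σ : V → C) (v x y : V) : Prop :=
  T.IsLeaf x ∧ T.IsLeaf y ∧ T.anc v x ∧ T.anc v y ∧ σ x ≠ σ y ∧
    ∀ y', T.IsLeaf y' → T.anc v y' → σ y' = σ y →
      ∀ u, T.anc v u → T.anc u x → T.anc u y' → T.anc u y

lemma subtree_bm_iff {T : RTree V} {σ : V → C} {v : V} (x y : {w : V // T.anc v w}) :
    (T.subtree v).BestMatch (fun w => σ w.1) x y ↔ T.BMin σ v x.1 y.1 := by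
  constructor
  · rintro ⟨hx, hy, hσ, h⟩
    refine ⟨(subtree_isLeaf_iff x).1 hx, (subtree_isLeaf_iff y).1 hy, x.2, y.2, hσ, ?_⟩
    intro y' hy' hvy' hc u hvu hux huy'
    exact h ⟨y', hvy'⟩ ((subtree_isLeaf_iff _).2 hy') hc ⟨u, hvu⟩ hux huy'
  · rintro ⟨hx, hy, -, -, hσ, h⟩
    refine ⟨(subtree_isLeaf_iff x).2 hx, (subtree_isLeaf_iff y).2 hy, hσ, ?_⟩
    intro y' hy' hc u hux huy'
    exact h y'.1 ((subtree_isLeaf_iff y').1 hy') y'.2 hc u.1 u.2 hux huy'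

lemma bmin_lift {T : RTree V} {σ : V → C} {v w a b : V} (hcw : T.IsChild w v)
    (h : T.BMin σ w a b) : T.BMin σ v a b := by
  obtain ⟨hvw, hne, hch⟩ := hcw
  obtain ⟨ha, hb, hwa, hwb, hσ, hmin⟩ := h
  refine ⟨ha, hb, T.trans _ _ _ hvw hwa, T.trans _ _ _ hvw hwb, hσ, ?_⟩
  intro y' hy' hvy' hc u hvu hua huy'
  rcases T.chain u w a hua hwa with h1 | h2
  · rcases hch u hvu h1 with rfl | rfl
    · exact T.trans _ _ _ hvw hwb
    · exact hwb
  · exact hmin y' hy' (T.trans _ _ _ h2 huy') hc u h2 hua huy'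

lemma bmin_cross {T : RTree V} {σ : V → C} {v w x y : V} {c : C}
    (hcw : T.IsChild w v) (hwx : T.anc w x) (hx : T.IsLeaf x)
    (hy : T.IsLeaf y) (hvy : T.anc v y) (hyc : σ y = c)
    (hno : ∀ z, T.IsLeaf z → T.anc w z → σ z ≠ c) :
    T.BMin σ v x y := by
  obtain ⟨hvw, hne, hch⟩ := hcw
  refine ⟨hx, hy, T.trans _ _ _ hvw hwx, hvy, ?_, ?_⟩
  · intro h; exact hno x hx hwx (h.trans hyc)
  · intro y' hy' hvy' hc u hvu hux huy'
    rcases T.chain u w x hux hwx with h1 | h2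
    · rcases hch u hvu h1 with rfl | rfl
      · exact hvy
      · exact absurd (hc.trans hyc) (hno y' hy' huy')
    · exact absurd (hc.trans hyc) (hno y' hy' (T.trans _ _ _ h2 huy'))

lemma contract_leaf_iff {T : RTree V} {v : V} (hv : v ≠ T.root) (hinner : ¬ T.IsLeaf v)
    (w : {w : V // w ≠ v}) : T.IsLeaf w.1 ↔ (T.contract v hv).IsLeaf w := by
  constructor
  · intro h u hu
    exact Subtype.ext (h u.1 hu)
  · intro h u hu
    by_cases huv : u = v
    · exfalso
      obtain ⟨z, hz, hzv⟩ : ∃ z, T.anc v z ∧ z ≠ v := by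
        by_contra hcon; push_neg at hcon
        exact hinner (fun a ha => hcon a ha)
      have h2 : T.anc w.1 z := T.trans _ _ _ (huv ▸ hu) hz
      have h3 := congrArg Subtype.val (h ⟨z, hzv⟩ h2)
      exact w.2 (T.antisymm _ _ (huv ▸ hu) (h3 ▸ hz))
    · exact congrArg Subtype.val (h ⟨u, huv⟩ hu)

lemma bm_contract {T : RTree V} {σ : V → C} {v : V} (hv : v ≠ T.root) (hinner : ¬ T.IsLeaf v)
    (x y : {w : V // w ≠ v}) (h : T.BestMatch σ x.1 y.1) :
    (T.contract v hv).BestMatch (fun w => σ w.1) x y := by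
  obtain ⟨hx, hy, hσ, hmin⟩ := h
  refine ⟨(contract_leaf_iff hv hinner x).1 hx, (contract_leaf_iff hv hinner y).1 hy, hσ, ?_⟩
  intro y' hy' hc u hux huy'
  exact hmin y'.1 ((contract_leaf_iff hv hinner y').2 hy') hc u.1 hux huy'

lemma star_of_not_redundant {T : RTree V} {σ : V → C} {v : V}
    (hv : v ≠ T.root) (hinner : ¬ T.IsLeaf v) (hnr : ¬ T.Redundant σ v) :
    ∃ w c, T.IsChild w v ∧ (∃ y0, T.IsLeaf y0 ∧ T.anc v y0 ∧ σ y0 = c) ∧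
      ∀ z, T.IsLeaf z → T.anc w z → σ z ≠ c := by
  have hbm : ¬ ∀ x y : {w : V // w ≠ v},
      (T.BestMatch σ x.1 y.1 ↔ (T.contract v hv).BestMatch (fun w => σ w.1) x y) := by
    intro hC
    exact hnr ⟨hv, hinner, fun w => contract_leaf_iff hv hinner w, hC⟩
  push_neg at hbm
  obtain ⟨x, y, hxy⟩ := hbm
  have hfwd := bm_contract (σ := σ) hv hinner x y
  have h' : (T.contract v hv).BestMatch (fun w => σ w.1) x y ∧ ¬ T.BestMatch σ x.1 y.1 := by
    tauto
  obtain ⟨hbm', hnbm⟩ := h'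
  obtain ⟨hx', hy', hσ', hmin'⟩ := hbm'
  have hx : T.IsLeaf x.1 := (contract_leaf_iff hv hinner x).2 hx'
  have hy : T.IsLeaf y.1 := (contract_leaf_iff hv hinner y).2 hy'
  have hfail : ¬ ∀ y'0, T.IsLeaf y'0 → σ y'0 = σ y.1 →
      ∀ u, T.anc u x.1 → T.anc u y'0 → T.anc u y.1 := by
    intro hall; exact hnbm ⟨hx, hy, hσ', hall⟩
  push_neg at hfail
  obtain ⟨y0, hy0l, hy0c, u, hux, huy0, hnuy⟩ := hfail
  have huv : u = v := by
    by_contra hne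
    have hy0v : y0 ≠ v := fun h => hinner (h ▸ hy0l)
    exact hnuy (hmin' ⟨y0, hy0v⟩ ((contract_leaf_iff hv hinner _).1 hy0l) hy0c ⟨u, hne⟩ hux huy0)
  rw [huv] at hux huy0 hnuy
  have hxv : x.1 ≠ v := fun h => hinner (h ▸ hx)
  obtain ⟨w, hcw, hwx⟩ := exists_child hux hxv
  refine ⟨w, σ y.1, hcw, ⟨y0, hy0l, huy0, hy0c⟩, ?_⟩
  intro z hz hwz hzc
  have hzv : z ≠ v := fun h => hinner (h ▸ hz)
  have hwy := hmin' ⟨z, hzv⟩ ((contract_leaf_iff hv hinner _).1 hz) hzc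
    ⟨w, hcw.2.1.symm⟩ hwx hwz
  exact hnuy (T.trans _ _ _ hcw.1 hwy)

lemma conn_aux (T : RTree V) (σ : V → C)
    (hstar : ∀ u, u ≠ T.root → ¬ T.IsLeaf u →
      ∃ w c, T.IsChild w u ∧ (∃ y0, T.IsLeaf y0 ∧ T.anc u y0 ∧ σ y0 = c) ∧
        ∀ z, T.IsLeaf z → T.anc w z → σ z ≠ c) :
    ∀ n v, (T.desc v).card ≤ n → v ≠ T.root →
      ∀ x, T.IsLeaf x → T.anc v x → ∀ y, T.IsLeaf y → T.anc v y →
        Relation.ReflTransGen (fun a b => (T.IsLeaf a ∧ T.anc v a) ∧ (T.IsLeaf b ∧ T.anc v b) ∧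
          (T.BMin σ v a b ∨ T.BMin σ v b a)) x y := by
  intro n
  induction n with
  | zero =>
    intro v hcard _
    exfalso
    have h1 : v ∈ T.desc v := mem_desc.2 (T.refl v)
    have h2 := Finset.card_pos.2 ⟨v, h1⟩
    omega
  | succ n ih =>
    intro v hcard hv
    by_cases hL : T.IsLeaf v
    · intro x hx hvx y hy hvy
      have hxv : x = v := hL x hvx
      have hyv : y = v := hL y hvy
      subst hxv; rw [hyv]
    · obtain ⟨w₁, c, hcw₁, ⟨y₀, hy₀l, hvy₀, hy₀c⟩, hno₁⟩ := hstar v hv hL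
      have hub : ∀ x, T.IsLeaf x → T.anc v x →
          Relation.ReflTransGen (fun a b => (T.IsLeaf a ∧ T.anc v a) ∧ (T.IsLeaf b ∧ T.anc v b) ∧
            (T.BMin σ v a b ∨ T.BMin σ v b a)) x y₀ := by
        intro x hx hvx
        have hxv : x ≠ v := fun h => hL (h ▸ hx)
        obtain ⟨w, hcw, hwx⟩ := exists_child hvx hxv
        by_cases hc : ∃ z, T.IsLeaf z ∧ T.anc w z ∧ σ z = c
        · obtain ⟨yj, hyjl, hwyj, hyjc⟩ := hc
          have hwroot : w ≠ T.root := by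
            intro h
            exact hcw.2.1 (T.antisymm _ _ hcw.1 (h.symm ▸ T.root_anc v))
          have hlt : (T.desc w).card ≤ n := by
            have := desc_card_lt hcw.1 (fun h => hcw.2.1 h.symm)
            omega
          have path1 := ih w hlt hwroot x hx hwx yj hyjl hwyj
          have path1' := Relation.ReflTransGen.mono (fun a b hab =>
            (⟨⟨hab.1.1, T.trans _ _ _ hcw.1 hab.1.2⟩, ⟨hab.2.1.1, T.trans _ _ _ hcw.1 hab.2.1.2⟩,
              hab.2.2.imp (bmin_lift hcw) (bmin_lift hcw)⟩ :
              (T.IsLeaf a ∧ T.anc v a) ∧ (T.IsLeaf b ∧ T.anc v b) ∧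
                (T.BMin σ v a b ∨ T.BMin σ v b a))) _ _ path1
          obtain ⟨x₁, hx₁l, hx₁w⟩ := exists_leaf_below' T w₁
          have A1 : T.BMin σ v x₁ yj :=
            bmin_cross hcw₁ hx₁w hx₁l hyjl (T.trans _ _ _ hcw.1 hwyj) hyjc hno₁
          have A2 : T.BMin σ v x₁ y₀ :=
            bmin_cross hcw₁ hx₁w hx₁l hy₀l hvy₀ hy₀c hno₁
          exact path1'.trans (Relation.ReflTransGen.head
            ⟨⟨hyjl, T.trans _ _ _ hcw.1 hwyj⟩,
              ⟨hx₁l, T.trans _ _ _ hcw₁.1 hx₁w⟩, Or.inr A1⟩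
            (Relation.ReflTransGen.single
              ⟨⟨hx₁l, T.trans _ _ _ hcw₁.1 hx₁w⟩, ⟨hy₀l, hvy₀⟩, Or.inl A2⟩))
        · push_neg at hc
          exact Relation.ReflTransGen.single ⟨⟨hx, hvx⟩, ⟨hy₀l, hvy₀⟩,
            Or.inl (bmin_cross hcw hwx hx hy₀l hvy₀ hy₀c (fun z hz hwz => hc z hz hwz))⟩
      intro x hx hvx y hy hvy
      have hsymm : Symmetric (fun a b => (T.IsLeaf a ∧ T.anc v a) ∧ (T.IsLeaf b ∧ T.anc v b) ∧
          (T.BMin σ v a b ∨ T.BMin σ v b a)) :=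
        fun a b ⟨ha, hb, h⟩ => ⟨hb, ha, h.symm⟩
      exact (hub x hx hvx).trans (Std.Symm.symm (self := @Relation.ReflTransGen.stdSymm _ _ ⟨fun a b h => hsymm h⟩) _ _ (hub y hy hvy))

end Aux

end RTree

/-- Let `(G,σ)` be a BMG and `(T,σ)` its least resolved tree.
Then for every vertex `v ≺_T ρ` the BMG `G(T(v), σ|.)` of the subtree rooted
at `v` is connected. -/
theorem lrt_subtree_bmg_connected {V C : Type} [Fintype V]
    (T : RTree V) (σ : V → C) (hLRT : T.LeastResolved σ)
    (v : V) (hv : v ≠ T.root) :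
    RTree.BMGConnected (T.subtree v) (fun w => σ w.1) := by
  classical
  obtain ⟨hphylo, hnr⟩ := hLRT
  have hstar : ∀ u, u ≠ T.root → ¬ T.IsLeaf u →
      ∃ w c, T.IsChild w u ∧ (∃ y0, T.IsLeaf y0 ∧ T.anc u y0 ∧ σ y0 = c) ∧
        ∀ z, T.IsLeaf z → T.anc w z → σ z ≠ c :=
    fun u hu hl => RTree.star_of_not_redundant hu hl (hnr u)
  constructor
  · obtain ⟨x, hx, hvx⟩ := RTree.exists_leaf_below' T v
    exact ⟨⟨x, hvx⟩, (RTree.subtree_isLeaf_iff _).2 hx⟩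
  · intro x hxS y hyS
    have hx : T.IsLeaf x.1 := (RTree.subtree_isLeaf_iff x).1 hxS
    have hy : T.IsLeaf y.1 := (RTree.subtree_isLeaf_iff y).1 hyS
    have hpath := RTree.conn_aux T σ hstar (T.desc v).card v le_rfl hv x.1 hx x.2 y.1 hy y.2
    have key : ∀ b, Relation.ReflTransGen
        (fun a b => (T.IsLeaf a ∧ T.anc v a) ∧ (T.IsLeaf b ∧ T.anc v b) ∧
          (T.BMin σ v a b ∨ T.BMin σ v b a)) x.1 b →
        ∀ hb : T.anc v b, Relation.ReflTransGen
          (fun a b => a ∈ (T.subtree v).leaves ∧ b ∈ (T.subtree v).leaves ∧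
            ((T.subtree v).BestMatch (fun w => σ w.1) a b ∨
              (T.subtree v).BestMatch (fun w => σ w.1) b a)) x ⟨b, hb⟩ := by
      intro b hp
      induction hp with
      | refl =>
        intro hb
        have hxx : (⟨x.1, hb⟩ : {w : V // T.anc v w}) = x := Subtype.ext rfl
        rw [hxx]
      | tail hst hstep ih =>
        intro hb
        obtain ⟨⟨hla, hva⟩, ⟨hlb, hvb⟩, hor⟩ := hstep
        exact (ih hva).tail ⟨(RTree.subtree_isLeaf_iff _).2 hla,
          (RTree.subtree_isLeaf_iff _).2 hlb,
          hor.imp (fun h => (RTree.subtree_bm_iff _ _).2 h)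
            (fun h => (RTree.subtree_bm_iff _ _).2 h)⟩
    have := key y.1 hpath y.2
    have hyy : (⟨y.1, y.2⟩ : {w : V // T.anc v w}) = y := Subtype.ext rfl
    rwa [hyy] at this
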